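/- arXiv:2601.11679 — 7 statements merged into one kernel-verified Lean document; each statement's English description precedes it below -/
import Mathlib

section
/- Let K be an invertible 3×3 real matrix whose third row is (0,0,1), D = diag(1,1,−1), C = K⁻ᵀ D K⁻¹, S = K D K⁻¹. Let x₁, x₂ ∈ ℝ² be affine image points with homogeneous lifts x̂₁, x̂₂, let θ be the angle between the rays K⁻¹x̂₁ and K⁻¹x̂₂, and let l₁ = C S x̂₁ and l₂ = C S x̂₂ be the reflected polars, regarded as lines in ℝ². If x₁ does not lie on l₁ and x₂ does not lie on l₂, then cos²θ = (dist(x₁, l₂) · dist(x₂, l₁)) / (dist(x₁, l₁) · dist(x₂, l₂)), where dist denotes Euclidean distance from a point of ℝ² to a line of ℝ². -/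
open Matrix

/-- The homogeneous lift `(y₁, y₂, 1)` of an affine image point `y ∈ ℝ²`. -/
def homLift (y : Fin 2 → ℝ) : Fin 3 → ℝ := ![y 0, y 1, 1]

/-- Euclidean distance from a point `y ∈ ℝ²` to the line represented by `l ∈ ℝ³`. -/
noncomputable def distPtLine (l : Fin 3 → ℝ) (y : Fin 2 → ℝ) : ℝ :=
  |l 0 * y 0 + l 1 * y 1 + l 2| / Real.sqrt ((l 0) ^ 2 + (l 1) ^ 2)

lemma ratio_aux (p b c s t : ℝ) (hb : 0 < b) (hc : 0 < c) (hs : 0 < s) (ht : 0 < t) :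
    p ^ 2 / (b * c) = (|p| / t * (|p| / s)) / (b / s * (c / t)) := by
  rw [div_mul_div_comm, div_mul_div_comm, ← abs_mul, abs_mul_self, ← sq]
  rw [div_div_div_eq]
  rw [eq_div_iff (by positivity)]
  field_simp

set_option maxHeartbeats 1000000 in
/-- `cos²θ` of the angle `θ` between the rays of two image points `x₁, x₂` is the ratio
of products of distances to the reflected polars `l₁ = C S x̂₁` and `l₂ = C S x̂₂`. -/
theorem cos_sq_angle_eq_dist_ratio (K : Matrix (Fin 3) (Fin 3) ℝ)
    (hK : IsUnit K.det) (hKrow : K 2 = ![0, 0, 1])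
    (D C S : Matrix (Fin 3) (Fin 3) ℝ)
    (hD : D = Matrix.diagonal ![1, 1, -1])
    (hC : C = (Kᵀ)⁻¹ * D * K⁻¹)
    (hS : S = K * D * K⁻¹)
    (x₁ x₂ : Fin 2 → ℝ) (l₁ l₂ : Fin 3 → ℝ)
    (hl₁ : l₁ = C.mulVec (S.mulVec (homLift x₁)))
    (hl₂ : l₂ = C.mulVec (S.mulVec (homLift x₂)))
    (hline₁ : (l₁ 0, l₁ 1) ≠ (0, 0))
    (hline₂ : (l₂ 0, l₂ 1) ≠ (0, 0))
    (hnot₁ : l₁ ⬝ᵥ homLift x₁ ≠ 0)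
    (hnot₂ : l₂ ⬝ᵥ homLift x₂ ≠ 0)
    (θ : ℝ)
    (hθ : θ = InnerProductGeometry.angle
        ((WithLp.equiv 2 (Fin 3 → ℝ)).symm (K⁻¹.mulVec (homLift x₁)))
        ((WithLp.equiv 2 (Fin 3 → ℝ)).symm (K⁻¹.mulVec (homLift x₂)))) :
    Real.cos θ ^ 2 =
      (distPtLine l₂ x₁ * distPtLine l₁ x₂) / (distPtLine l₁ x₁ * distPtLine l₂ x₂) := by
  set v₁ := K⁻¹.mulVec (homLift x₁) with hv₁
  set v₂ := K⁻¹.mulVec (homLift x₂) with hv₂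
  -- D * D = 1
  have hDD : D * D = 1 := by
    subst hD
    rw [Matrix.diagonal_mul_diagonal]
    ext i j
    fin_cases i <;> fin_cases j <;> simp [Matrix.diagonal, Matrix.one_apply]
  -- C * S = (K⁻¹)ᵀ * K⁻¹
  have hCS : C * S = (K⁻¹)ᵀ * K⁻¹ := by
    rw [hC, hS, ← Matrix.transpose_nonsing_inv]
    have h1 : K⁻¹ * K = 1 := Matrix.nonsing_inv_mul K hK
    calc (K⁻¹)ᵀ * D * K⁻¹ * (K * D * K⁻¹)
        = (K⁻¹)ᵀ * (D * (K⁻¹ * (K * (D * K⁻¹)))) := by simp only [mul_assoc]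
      _ = (K⁻¹)ᵀ * (D * (D * K⁻¹)) := by rw [← mul_assoc K⁻¹ K, h1, one_mul]
      _ = (K⁻¹)ᵀ * ((D * D) * K⁻¹) := by rw [mul_assoc]
      _ = (K⁻¹)ᵀ * K⁻¹ := by rw [hDD, one_mul]
  -- lᵢ = (K⁻¹)ᵀ *ᵥ vᵢ
  have hl₁' : l₁ = (K⁻¹)ᵀ.mulVec v₁ := by
    rw [hl₁, Matrix.mulVec_mulVec, hCS, ← Matrix.mulVec_mulVec]
  have hl₂' : l₂ = (K⁻¹)ᵀ.mulVec v₂ := by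
    rw [hl₂, Matrix.mulVec_mulVec, hCS, ← Matrix.mulVec_mulVec]
  -- key dot product identities
  have key : ∀ (a : Fin 3 → ℝ) (y : Fin 2 → ℝ),
      ((K⁻¹)ᵀ.mulVec a) ⬝ᵥ homLift y = a ⬝ᵥ K⁻¹.mulVec (homLift y) := by
    intro a y
    rw [Matrix.mulVec_transpose, Matrix.dotProduct_mulVec]
  have d11 : l₁ ⬝ᵥ homLift x₁ = v₁ ⬝ᵥ v₁ := by rw [hl₁', key, hv₁]
  have d22 : l₂ ⬝ᵥ homLift x₂ = v₂ ⬝ᵥ v₂ := by rw [hl₂', key, hv₂]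
  have d12 : l₁ ⬝ᵥ homLift x₂ = v₁ ⬝ᵥ v₂ := by rw [hl₁', key, hv₂]
  have d21 : l₂ ⬝ᵥ homLift x₁ = v₁ ⬝ᵥ v₂ := by
    rw [hl₂', key, hv₁, dotProduct_comm]
  -- inner products and norms on EuclideanSpace
  have hinner : ∀ a b : Fin 3 → ℝ,
      (inner ℝ ((WithLp.equiv 2 (Fin 3 → ℝ)).symm a) ((WithLp.equiv 2 (Fin 3 → ℝ)).symm b) : ℝ)
        = a ⬝ᵥ b := by
    intro a b
    simp [PiLp.inner_apply, RCLike.inner_apply, dotProduct, mul_comm]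
  have hnorm : ∀ a : Fin 3 → ℝ,
      ‖(WithLp.equiv 2 (Fin 3 → ℝ)).symm a‖ ^ 2 = a ⬝ᵥ a := by
    intro a
    rw [← real_inner_self_eq_norm_sq, hinner]
  have hb0 : 0 < v₁ ⬝ᵥ v₁ := by
    have hne : v₁ ⬝ᵥ v₁ ≠ 0 := by rwa [d11] at hnot₁
    have hle : (0:ℝ) ≤ v₁ ⬝ᵥ v₁ := by rw [← hnorm v₁]; positivity
    exact lt_of_le_of_ne hle (Ne.symm hne)
  have hc0 : 0 < v₂ ⬝ᵥ v₂ := by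
    have hne : v₂ ⬝ᵥ v₂ ≠ 0 := by rwa [d22] at hnot₂
    have hle : (0:ℝ) ≤ v₂ ⬝ᵥ v₂ := by rw [← hnorm v₂]; positivity
    exact lt_of_le_of_ne hle (Ne.symm hne)
  -- left side
  have hcos : Real.cos θ ^ 2 = (v₁ ⬝ᵥ v₂) ^ 2 / ((v₁ ⬝ᵥ v₁) * (v₂ ⬝ᵥ v₂)) := by
    rw [hθ, InnerProductGeometry.cos_angle, div_pow, mul_pow, hnorm, hnorm, hinner]
  have dot_eq : ∀ (l : Fin 3 → ℝ) (y : Fin 2 → ℝ),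
      l 0 * y 0 + l 1 * y 1 + l 2 = l ⬝ᵥ homLift y := by
    intro l y
    simp [dotProduct, homLift, Fin.sum_univ_three]
  -- sqrt normalizers are positive
  have hN : ∀ l : Fin 3 → ℝ, (l 0, l 1) ≠ (0, 0) →
      0 < Real.sqrt ((l 0) ^ 2 + (l 1) ^ 2) := by
    intro l hl
    apply Real.sqrt_pos.2
    have h' : l 0 ≠ 0 ∨ l 1 ≠ 0 := by
      by_contra h
      push_neg at h
      exact hl (by simp [h.1, h.2])
    rcases h' with h | h
    · have := lt_of_le_of_ne (sq_nonneg (l 0)) (Ne.symm (pow_ne_zero 2 h))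
      nlinarith [sq_nonneg (l 1)]
    · have := lt_of_le_of_ne (sq_nonneg (l 1)) (Ne.symm (pow_ne_zero 2 h))
      nlinarith [sq_nonneg (l 0)]
  have hN₁ := hN l₁ hline₁
  have hN₂ := hN l₂ hline₂
  have e1 : distPtLine l₂ x₁ = |v₁ ⬝ᵥ v₂| / Real.sqrt ((l₂ 0) ^ 2 + (l₂ 1) ^ 2) := by
    unfold distPtLine; rw [dot_eq, d21]
  have e2 : distPtLine l₁ x₂ = |v₁ ⬝ᵥ v₂| / Real.sqrt ((l₁ 0) ^ 2 + (l₁ 1) ^ 2) := by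
    unfold distPtLine; rw [dot_eq, d12]
  have e3 : distPtLine l₁ x₁ = (v₁ ⬝ᵥ v₁) / Real.sqrt ((l₁ 0) ^ 2 + (l₁ 1) ^ 2) := by
    unfold distPtLine; rw [dot_eq, d11, abs_of_pos hb0]
  have e4 : distPtLine l₂ x₂ = (v₂ ⬝ᵥ v₂) / Real.sqrt ((l₂ 0) ^ 2 + (l₂ 1) ^ 2) := by
    unfold distPtLine; rw [dot_eq, d22, abs_of_pos hc0]
  rw [hcos, e1, e2, e3, e4]
  exact ratio_aux _ _ _ _ _ hb0 hc0 hN₁ hN₂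
end

section
/- Let K be an invertible 3×3 real matrix whose third row is (0,0,1), D = diag(1,1,−1), C = K⁻ᵀ D K⁻¹, S = K D K⁻¹. Let x₁, x₂ be affine image points in ℝ² with lifts x̂₁, x̂₂, θ the angle between the rays K⁻¹x̂₁ and K⁻¹x̂₂, and l₁ = C S x̂₁ the reflected polar of x₁. Then cos θ < 0 if and only if x₁ and x₂ lie strictly on opposite sides of the line l₁, i.e. (l₁ᵀ x̂₁)·(l₁ᵀ x̂₂) < 0. -/
open Matrix

/-- The sign of `cos θ`, for the angle `θ` between the rays of `x₁` and `x₂`, is negative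
exactly when `x₁` and `x₂` lie strictly on opposite sides of the reflected polar
`l₁ = C S x̂₁` of `x₁`. -/
theorem cos_angle_neg_iff_opposite_sides (K : Matrix (Fin 3) (Fin 3) ℝ)
    (hK : IsUnit K.det) (hKrow : K 2 = ![0, 0, 1])
    (D C S : Matrix (Fin 3) (Fin 3) ℝ)
    (hD : D = Matrix.diagonal ![1, 1, -1])
    (hC : C = (Kᵀ)⁻¹ * D * K⁻¹)
    (hS : S = K * D * K⁻¹)
    (x₁ x₂ : Fin 2 → ℝ) (l₁ : Fin 3 → ℝ)
    (hl₁ : l₁ = C.mulVec (S.mulVec (homLift x₁)))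
    (θ : ℝ)
    (hθ : θ = InnerProductGeometry.angle
        ((WithLp.equiv 2 (Fin 3 → ℝ)).symm (K⁻¹.mulVec (homLift x₁)))
        ((WithLp.equiv 2 (Fin 3 → ℝ)).symm (K⁻¹.mulVec (homLift x₂)))) :
    Real.cos θ < 0 ↔ (l₁ ⬝ᵥ homLift x₁) * (l₁ ⬝ᵥ homLift x₂) < 0 := by
  set u : Fin 3 → ℝ := K⁻¹.mulVec (homLift x₁) with hu
  set v : Fin 3 → ℝ := K⁻¹.mulVec (homLift x₂) with hv
  have hDD : D * D = 1 := by
    subst hD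
    ext i j
    fin_cases i <;> fin_cases j <;>
      simp [Matrix.mul_apply, Fin.sum_univ_three, Matrix.diagonal]
  have hinv : K⁻¹ * K = 1 := Matrix.nonsing_inv_mul K hK
  have hCS : C * S = (Kᵀ)⁻¹ * K⁻¹ := by
    subst hC hS
    calc (Kᵀ)⁻¹ * D * K⁻¹ * (K * D * K⁻¹)
        = (Kᵀ)⁻¹ * (D * ((K⁻¹ * K) * (D * K⁻¹))) := by
          simp only [Matrix.mul_assoc]
      _ = (Kᵀ)⁻¹ * ((D * D) * K⁻¹) := by rw [hinv, Matrix.one_mul, Matrix.mul_assoc]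
      _ = (Kᵀ)⁻¹ * K⁻¹ := by rw [hDD, Matrix.one_mul]
  have hl₁' : l₁ = (K⁻¹)ᵀ.mulVec u := by
    rw [hl₁, Matrix.mulVec_mulVec, hCS, Matrix.transpose_nonsing_inv, ← Matrix.mulVec_mulVec]
  have hdot : ∀ w : Fin 3 → ℝ, l₁ ⬝ᵥ w = u ⬝ᵥ K⁻¹.mulVec w := by
    intro w
    rw [hl₁', Matrix.mulVec_transpose]
    exact (Matrix.dotProduct_mulVec u K⁻¹ w).symm
  have hlift_ne : ∀ y : Fin 2 → ℝ, homLift y ≠ 0 := by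
    intro y h
    have := congrFun h 2
    simp [homLift] at this
  have hne : ∀ y : Fin 2 → ℝ, K⁻¹.mulVec (homLift y) ≠ 0 := by
    intro y h
    apply hlift_ne y
    have : K.mulVec (K⁻¹.mulVec (homLift y)) = K.mulVec 0 := by rw [h]
    rwa [Matrix.mulVec_mulVec, Matrix.mul_nonsing_inv K hK, Matrix.one_mulVec,
      Matrix.mulVec_zero] at this
  set U := (WithLp.equiv 2 (Fin 3 → ℝ)).symm u with hU
  set V := (WithLp.equiv 2 (Fin 3 → ℝ)).symm v with hV
  have hUne : U ≠ 0 := by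
    intro h
    apply hne x₁
    have := congrArg (WithLp.equiv 2 (Fin 3 → ℝ)) h
    simpa [hU] using this
  have hVne : V ≠ 0 := by
    intro h
    apply hne x₂
    have := congrArg (WithLp.equiv 2 (Fin 3 → ℝ)) h
    simpa [hV] using this
  have hinner : (inner ℝ U V : ℝ) = u ⬝ᵥ v := by
    simp [hU, hV, PiLp.inner_apply, dotProduct, mul_comm]
  have huu : u ⬝ᵥ u = ‖U‖ ^ 2 := by
    rw [← real_inner_self_eq_norm_sq, hU]
    simp [PiLp.inner_apply, dotProduct, mul_comm]
    rw [EuclideanSpace.real_norm_sq_eq]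
    simp [sq]
  have hcos : Real.cos θ = (inner ℝ U V : ℝ) / (‖U‖ * ‖V‖) := by
    rw [hθ]; exact InnerProductGeometry.cos_angle U V
  have hUpos : 0 < ‖U‖ := norm_pos_iff.mpr hUne
  have hVpos : 0 < ‖V‖ := norm_pos_iff.mpr hVne
  rw [hcos, div_neg_iff, hdot (homLift x₁), hdot (homLift x₂), ← hu, ← hv, huu, hinner]
  constructor
  · rintro (⟨_, h2⟩ | ⟨h1, _⟩)
    · exact absurd (mul_pos hUpos hVpos) (not_lt.mpr h2.le)
    · exact mul_neg_of_pos_of_neg (by positivity) h1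
  · intro h
    right
    refine ⟨?_, mul_pos hUpos hVpos⟩
    by_contra hc
    push_neg at hc
    exact absurd h (not_lt.mpr (mul_nonneg (by positivity) hc))
end

section
/- In Euclidean ℝ³, let the image plane be {z = 0}, the principal point P = (0,0,0), and the camera centre C′ = (0,0,f) with f > 0. Let L be a line contained in the image plane, O the foot of the perpendicular from P to L, and d = ‖O‖ > 0. Let C = O − (√(f² + d²)/d)·O be the conformal point of L. Then for every point A ∈ L, dist(C, A) = dist(C′, A). -/
open scoped RealInnerProductSpace

/-- The conformal point `C` of a line `L` in the image plane `{z = 0}` is equidistant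
with the camera centre `C' = (0,0,f)` from every point `A` of `L`. Here `O` is the foot
of the perpendicular from the principal point `P = 0` to `L`, `d = ‖O‖ > 0`, and
`C = O - (√(f² + d²)/d) • O`. -/
theorem conformal_point_equidistant (f : ℝ) (hf : 0 < f)
    (L : AffineSubspace ℝ (EuclideanSpace ℝ (Fin 3)))
    (hLline : Module.finrank ℝ L.direction = 1)
    (hLplane : ∀ x ∈ L, x 2 = 0)
    (O : EuclideanSpace ℝ (Fin 3)) (hO : O ∈ L)
    (hfoot : ∀ x ∈ L, ⟪x - O, O⟫ = (0 : ℝ))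
    (d : ℝ) (hd : d = ‖O‖) (hdpos : 0 < d)
    (C C' : EuclideanSpace ℝ (Fin 3))
    (hC : C = O - (Real.sqrt (f ^ 2 + d ^ 2) / d) • O)
    (hC' : C' = (WithLp.equiv 2 (Fin 3 → ℝ)).symm ![0, 0, f]) :
    ∀ A ∈ L, dist C A = dist C' A := by
  intro A hA
  have hA2 : A 2 = 0 := hLplane A hA
  set s : ℝ := Real.sqrt (f ^ 2 + d ^ 2) / d with hs
  have hsqrt : Real.sqrt (f ^ 2 + d ^ 2) ^ 2 = f ^ 2 + d ^ 2 :=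
    Real.sq_sqrt (by positivity)
  have hs2 : s ^ 2 * d ^ 2 = f ^ 2 + d ^ 2 := by
    rw [hs, div_pow, div_mul_cancel₀ _ (by positivity), hsqrt]
  have hOO : ⟪O, O⟫ = d ^ 2 := by
    rw [real_inner_self_eq_norm_sq, ← hd]
  have hAO : ⟪A, O⟫ = d ^ 2 := by
    have h := hfoot A hA
    rw [inner_sub_left, hOO] at h
    linarith
  have hC'A : ⟪C', A⟫ = (0 : ℝ) := by
    subst hC'
    simp [PiLp.inner_apply, Fin.sum_univ_three, hA2]
  have hC'C' : ⟪C', C'⟫ = f ^ 2 := by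
    subst hC'
    simp [PiLp.inner_apply, Fin.sum_univ_three]
    rw [EuclideanSpace.norm_sq_eq]
    simp [Fin.sum_univ_three]
  have key : dist C A ^ 2 = dist C' A ^ 2 := by
    rw [dist_eq_norm, dist_eq_norm, ← real_inner_self_eq_norm_sq,
      ← real_inner_self_eq_norm_sq, hC]
    simp only [inner_sub_left, inner_sub_right, real_inner_smul_left,
      real_inner_smul_right, hOO, hAO, hC'A, hC'C', real_inner_comm A C']
    have hOA : ⟪O, A⟫ = d ^ 2 := by rw [real_inner_comm]; exact hAO
    have hAC' : ⟪A, C'⟫ = (0 : ℝ) := by rw [real_inner_comm]; exact hC'A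
    rw [hOA, hAC']
    nlinarith [hs2]
  have h1 : (0 : ℝ) ≤ dist C A := dist_nonneg
  have h2 : (0 : ℝ) ≤ dist C' A := dist_nonneg
  nlinarith [key, h1, h2]
end

section
/- In Euclidean ℝ³, let the image plane be {z = 0}, the principal point P = (0,0,0), the camera centre C′ = (0,0,f) with f > 0, L a line in the image plane with foot of perpendicular O from P and d = ‖O‖ > 0, and C = O − (√(f² + d²)/d)·O the conformal point of L. Then for all points A, B ∈ L, the angle ∠ A C B equals the angle ∠ A C′ B. That is, the angle between the rays from the camera centre to any two points of L can be measured in the image plane at the conformal point. -/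
open scoped RealInnerProductSpace
open EuclideanGeometry

lemma angle_congr' {x y x' y' : EuclideanSpace ℝ (Fin 3)}
    (h : ⟪x, y⟫ = ⟪x', y'⟫) (hx : ⟪x, x⟫ = ⟪x', x'⟫) (hy : ⟪y, y⟫ = ⟪y', y'⟫) :
    InnerProductGeometry.angle x y = InnerProductGeometry.angle x' y' := by
  have h1 : ‖x‖ = ‖x'‖ := by rw [norm_eq_sqrt_real_inner, norm_eq_sqrt_real_inner, hx]
  have h2 : ‖y‖ = ‖y'‖ := by rw [norm_eq_sqrt_real_inner, norm_eq_sqrt_real_inner, hy]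
  rw [InnerProductGeometry.angle, InnerProductGeometry.angle, h, h1, h2]

/-- Angles subtended at the conformal point `C` of a line `L` in the image plane equal
the angles subtended at the camera centre `C' = (0,0,f)`: for all `A, B ∈ L`,
`∠ A C B = ∠ A C' B`. -/
theorem angle_at_conformal_point_eq_angle_at_centre (f : ℝ) (hf : 0 < f)
    (L : AffineSubspace ℝ (EuclideanSpace ℝ (Fin 3)))
    (hLline : Module.finrank ℝ L.direction = 1)
    (hLplane : ∀ x ∈ L, x 2 = 0)
    (O : EuclideanSpace ℝ (Fin 3)) (hO : O ∈ L)
    (hfoot : ∀ x ∈ L, ⟪x - O, O⟫ = (0 : ℝ))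
    (d : ℝ) (hd : d = ‖O‖) (hdpos : 0 < d)
    (C C' : EuclideanSpace ℝ (Fin 3))
    (hC : C = O - (Real.sqrt (f ^ 2 + d ^ 2) / d) • O)
    (hC' : C' = (WithLp.equiv 2 (Fin 3 → ℝ)).symm ![0, 0, f]) :
    ∀ A ∈ L, ∀ B ∈ L, ∠ A C B = ∠ A C' B := by
  set k : ℝ := Real.sqrt (f ^ 2 + d ^ 2) / d with hk
  have hO2 : O 2 = 0 := hLplane O hO
  have hd2 : O 0 ^ 2 + O 1 ^ 2 = d ^ 2 := by
    have : ⟪O, O⟫ = ‖O‖ ^ 2 := real_inner_self_eq_norm_sq O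
    rw [PiLp.inner_apply, Fin.sum_univ_three] at this
    simp [RCLike.inner_apply, hO2] at this
    rw [hd]
    nlinarith [this]
  have hk2 : k ^ 2 * d ^ 2 = f ^ 2 + d ^ 2 := by
    rw [hk, div_pow, div_mul_cancel₀ _ (by positivity : d ^ 2 ≠ 0)]
    exact Real.sq_sqrt (by positivity)
  have hfoot' : ∀ x ∈ L, x 0 * O 0 + x 1 * O 1 = d ^ 2 := by
    intro x hx
    have h := hfoot x hx
    rw [PiLp.inner_apply, Fin.sum_univ_three] at h
    simp only [RCLike.inner_apply, starRingEnd_apply, star_trivial, PiLp.sub_apply] at h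
    rw [hO2] at h
    nlinarith [h, hd2]
  -- key inner product identity
  have key : ∀ A ∈ L, ∀ B ∈ L, ⟪A - C, B - C⟫ = ⟪A - C', B - C'⟫ := by
    intro A hA B hB
    have hA2 : A 2 = 0 := hLplane A hA
    have hB2 : B 2 = 0 := hLplane B hB
    have hAO := hfoot' A hA
    have hBO := hfoot' B hB
    rw [PiLp.inner_apply, PiLp.inner_apply, Fin.sum_univ_three, Fin.sum_univ_three]
    simp only [RCLike.inner_apply, starRingEnd_apply, star_trivial, PiLp.sub_apply,
      hC, hC', PiLp.smul_apply, smul_eq_mul, WithLp.equiv_symm_apply, PiLp.toLp_apply,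
      Matrix.cons_val_zero, Matrix.cons_val_one, Matrix.head_cons, Matrix.cons_val_two,
      Matrix.tail_cons]
    rw [hA2, hB2, hO2]
    linear_combination (k-1)*hAO + (k-1)*hBO + (1-k)^2*hd2 + hk2
  intro A hA B hB
  have h1 := key A hA B hB
  have h2 := key A hA A hA
  have h3 := key B hB B hB
  rw [EuclideanGeometry.angle, EuclideanGeometry.angle]
  simp only [vsub_eq_sub]
  exact angle_congr' h1 h2 h3
end

section
/- Let f > 0 and let v₁, v₂, v₃ ∈ ℝ² be three image points of a square-pixel camera with principal point p ∈ ℝ² and focal length f whose back-projected rays are mutually orthogonal, i.e. ⟨vᵢ − p, vⱼ − p⟩ + f² = 0 for all i ≠ j. Then ⟨v₁ − p, v₂ − v₃⟩ = 0, ⟨v₂ − p, v₃ − v₁⟩ = 0 and ⟨v₃ − p, v₁ − v₂⟩ = 0; that is, the principal point p (the centre of the calibrating conic) is the orthocentre of the triangle formed by the three mutually orthogonal vanishing points. -/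
open scoped RealInnerProductSpace

/-- If the back-projected rays of three image points `v₁, v₂, v₃` of a square-pixel
camera with principal point `p` and focal length `f` are mutually orthogonal
(`⟪vᵢ - p, vⱼ - p⟫ + f² = 0` for `i ≠ j`), then `p` is the orthocentre of the triangle
`v₁ v₂ v₃`. -/
theorem principal_point_is_orthocentre (f : ℝ) (hf : 0 < f)
    (p v₁ v₂ v₃ : EuclideanSpace ℝ (Fin 2))
    (h12 : ⟪v₁ - p, v₂ - p⟫ + f ^ 2 = (0 : ℝ))
    (h13 : ⟪v₁ - p, v₃ - p⟫ + f ^ 2 = (0 : ℝ))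
    (h23 : ⟪v₂ - p, v₃ - p⟫ + f ^ 2 = (0 : ℝ)) :
    ⟪v₁ - p, v₂ - v₃⟫ = (0 : ℝ) ∧ ⟪v₂ - p, v₃ - v₁⟫ = (0 : ℝ) ∧
      ⟪v₃ - p, v₁ - v₂⟫ = (0 : ℝ) := by
  have e : ∀ a b : EuclideanSpace ℝ (Fin 2), a - b = (a - p) - (b - p) := by
    intro a b; abel
  refine ⟨?_, ?_, ?_⟩
  · rw [e v₂ v₃, inner_sub_right]; linarith
  · rw [e v₃ v₁, inner_sub_right]
    nlinarith [real_inner_comm (v₂ - p) (v₁ - p)]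
  · rw [e v₁ v₂, inner_sub_right]
    nlinarith [real_inner_comm (v₃ - p) (v₁ - p), real_inner_comm (v₃ - p) (v₂ - p)]
end

section
/- Let f > 0, let P, A, B ∈ ℝ² be points with ⟨A − P, B − P⟩ + f² = 0 (the rays of A and B through a square-pixel camera with principal point P and focal length f are orthogonal), and let O be the foot of the perpendicular from P to the line through A and B (assume A ≠ B). Then O lies strictly between A and B, and f² = ‖A − O‖·‖B − O‖ − ‖P − O‖². That is, the conformal-point construction recovers the focal length as f² = ab − d² where a = |AO|, b = |OB|, d = |OP|. -/
open scoped RealInnerProductSpace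

/-- If image points `A, B` have orthogonal back-projected rays
(`⟪A - P, B - P⟫ + f² = 0`) for a square-pixel camera with principal point `P` and
focal length `f > 0`, and `O` is the foot of the perpendicular from `P` to the line
`AB`, then `O` lies strictly between `A` and `B` and `f² = ‖A - O‖·‖B - O‖ - ‖P - O‖²`. -/
theorem focal_length_from_conformal_construction (f : ℝ) (hf : 0 < f)
    (P A B O : EuclideanSpace ℝ (Fin 2)) (hAB : A ≠ B)
    (horth : ⟪A - P, B - P⟫ + f ^ 2 = (0 : ℝ))
    (hOline : ∃ t : ℝ, O = A + t • (B - A))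
    (hOperp : ⟪P - O, B - A⟫ = (0 : ℝ)) :
    (∃ t : ℝ, 0 < t ∧ t < 1 ∧ O = A + t • (B - A)) ∧
      f ^ 2 = ‖A - O‖ * ‖B - O‖ - ‖P - O‖ ^ 2 := by
  obtain ⟨t, rfl⟩ := hOline
  have hu : B - A ≠ 0 := sub_ne_zero.mpr hAB.symm
  have hu2 : (0:ℝ) < ‖B - A‖ := norm_pos_iff.mpr hu
  have huu : ⟪B - A, B - A⟫ = ‖B - A‖ ^ 2 := real_inner_self_eq_norm_sq _
  have hAO : A - (A + t • (B - A)) = (-t) • (B - A) := by module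
  have hBO : B - (A + t • (B - A)) = (1 - t) • (B - A) := by module
  have hPO : P - (A + t • (B - A)) = (P - A) - t • (B - A) := by module
  have hperp : ⟪P - A, B - A⟫ = t * ⟪B - A, B - A⟫ := by
    rw [hPO, inner_sub_left, real_inner_smul_left] at hOperp
    linarith
  have horth' : -⟪P - A, B - A⟫ + ⟪P - A, P - A⟫ + f ^ 2 = 0 := by
    have h1 : A - P = -(P - A) := by module
    have h2 : B - P = (B - A) - (P - A) := by module
    rw [h1, h2, inner_neg_left, inner_sub_right] at horth
    linarith
  have hPOn : ‖P - (A + t • (B - A))‖ ^ 2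
      = ⟪P - A, P - A⟫ - 2 * t * ⟪P - A, B - A⟫ + t ^ 2 * ⟪B - A, B - A⟫ := by
    rw [hPO, ← real_inner_self_eq_norm_sq]
    simp only [inner_sub_left, inner_sub_right, real_inner_smul_left, real_inner_smul_right]
    rw [real_inner_comm A P, real_inner_comm B P, real_inner_comm B A]
    ring
  have key : t * (1 - t) * ‖B - A‖ ^ 2 = f ^ 2 + ‖P - (A + t • (B - A))‖ ^ 2 := by
    rw [hPOn, ← huu]
    linear_combination (2 * t - 1) * hperp - horth'
  have hPOpos : (0:ℝ) ≤ ‖P - (A + t • (B - A))‖ ^ 2 := sq_nonneg _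
  have hpos : 0 < t * (1 - t) * ‖B - A‖ ^ 2 := by
    rw [key]; nlinarith [pow_pos hf 2, hPOpos]
  have htt : 0 < t * (1 - t) := by nlinarith [hpos, sq_nonneg ‖B - A‖]
  have ht0 : 0 < t := by nlinarith [htt, sq_nonneg t]
  have ht1 : t < 1 := by nlinarith [htt, sq_nonneg (t - 1)]
  refine ⟨⟨t, ht0, ht1, rfl⟩, ?_⟩
  have hA : ‖A - (A + t • (B - A))‖ = t * ‖B - A‖ := by
    rw [hAO, norm_smul, Real.norm_eq_abs, abs_neg, abs_of_pos ht0]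
  have hB : ‖B - (A + t • (B - A))‖ = (1 - t) * ‖B - A‖ := by
    rw [hBO, norm_smul, Real.norm_eq_abs, abs_of_pos (by linarith)]
  rw [hA, hB]
  linear_combination -key
end

section
/- Let P, A, B ∈ ℝ² with A ≠ P and A ≠ B, let O be the foot of the perpendicular from P to the line through A and B, and suppose O lies strictly between A and B. Set a = ‖A − O‖, b = ‖B − O‖, d = ‖P − O‖, h = ‖A − P‖, and let x = ⟨B − P, (P − A)/h⟩ be the signed length of the projection of B − P onto the direction from A towards P. Then h·x = a·b − d²; i.e., the focal-length estimates f² = xh from the reflected-polar construction and f² = ab − d² from the conformal-point construction coincide. -/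
open scoped RealInnerProductSpace

/-- With `O` the foot of the perpendicular from `P` to the line `AB`, lying strictly
between `A` and `B`, and `a = ‖A - O‖`, `b = ‖B - O‖`, `d = ‖P - O‖`, `h = ‖A - P‖`,
`x = ⟪B - P, (P - A)/h⟫`, the two focal-length estimates agree: `h·x = a·b - d²`. -/
theorem focal_length_estimates_agree
    (P A B O : EuclideanSpace ℝ (Fin 2)) (hAP : A ≠ P) (hAB : A ≠ B)
    (hObtw : ∃ t : ℝ, 0 < t ∧ t < 1 ∧ O = A + t • (B - A))
    (hOperp : ⟪P - O, B - A⟫ = (0 : ℝ))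
    (a b d h x : ℝ)
    (ha : a = ‖A - O‖) (hb : b = ‖B - O‖) (hd : d = ‖P - O‖) (hh : h = ‖A - P‖)
    (hx : x = ⟪B - P, h⁻¹ • (P - A)⟫) :
    h * x = a * b - d ^ 2 := by
  obtain ⟨t, ht0, ht1, rfl⟩ := hObtw
  set v := B - A with hv
  set w := P - (A + t • v) with hw
  have hh0 : h ≠ 0 := by
    rw [hh, norm_ne_zero_iff]
    exact sub_ne_zero.mpr hAP
  have ha' : a = t * ‖v‖ := by
    have h1 : A - (A + t • v) = (-t) • v := by module
    rw [ha, h1, norm_smul, Real.norm_eq_abs, abs_neg, abs_of_pos ht0]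
  have hb' : b = (1 - t) * ‖v‖ := by
    have h1 : B - (A + t • v) = (1 - t) • v := by rw [hv]; module
    rw [hb, h1, norm_smul, Real.norm_eq_abs, abs_of_pos (by linarith)]
  have hhx : h * x = ⟪B - P, P - A⟫ := by
    rw [hx, real_inner_smul_right]
    field_simp
  have hPA : P - A = w + t • v := by rw [hw]; module
  have hBP : B - P = (1 - t) • v - w := by rw [hw, hv]; module
  have hwv : ⟪w, v⟫ = (0 : ℝ) := hOperp
  have hvw : ⟪v, w⟫ = (0 : ℝ) := by rw [real_inner_comm]; exact hwv
  rw [hhx, hPA, hBP, inner_sub_left, inner_add_right, inner_add_right,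
    real_inner_smul_left, real_inner_smul_left, real_inner_smul_right,
    real_inner_smul_right, hwv, hvw, real_inner_self_eq_norm_sq,
    real_inner_self_eq_norm_sq, ha', hb', hd]
  ring
end
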